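/- Let n ≥ 1, let g : Fin n → ℝ be injective (distinct confidence scores), and for each i define the rank rᵢ := #{j : g(j) ≤ g(i)} ∈ {1, …, n}. Then for every i, ∑_{j=1}^{n} 𝟙[g(i) ≥ g(j)] / (#{k : g(k) ≥ g(j)}) = H_n − H_{n−rᵢ}, where H_m := ∑_{k=1}^{m} 1/k is the m-th harmonic number (H_0 := 0). Consequently, for any loss values ℓ : Fin n → ℝ, the empirical AURC (1/n)∑_{j=1}^{n} [ (1/n)∑_{i=1}^{n} ℓ(i)·𝟙[g(i) ≥ g(j)] ] / [ (1/n)∑_{k=1}^{n} 𝟙[g(k) ≥ g(j)] ] equals the plug-in form (1/n)∑_{i=1}^{n} (H_n − H_{n−rᵢ}) ℓ(i). -/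

import Mathlib

open Finset

/-- `harmonicR m = H_m = ∑_{k=1}^m 1/k`, with `H_0 = 0`. -/
noncomputable def harmonicR (m : ℕ) : ℝ := ∑ k ∈ Finset.range m, (1 : ℝ) / (k + 1)

lemma harmonic_diff (n t : ℕ) (_ht : t ≤ n) :
    harmonicR n - harmonicR (n - t) = ∑ k ∈ Finset.Ico (n - t) n, (1 : ℝ) / (k + 1) := by
  unfold harmonicR
  rw [Finset.range_eq_Ico,
    ← Finset.sum_Ico_consecutive (fun k : ℕ => (1 : ℝ) / (k + 1))
      (Nat.zero_le (n - t)) (Nat.sub_le n t)]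
  rw [Finset.range_eq_Ico]
  ring

/-- For injective confidence scores `g` on `n` samples with ranks
`rᵢ = #{j : g j ≤ g i}`, the inner weight sum equals `H_n − H_{n−rᵢ}`, and hence
the empirical AURC double sum equals the plug-in form
`(1/n) ∑ᵢ (H_n − H_{n−rᵢ}) ℓᵢ`. -/
theorem empirical_aurc_eq_plugin (n : ℕ) (hn : 1 ≤ n) (g : Fin n → ℝ)
    (hg : Function.Injective g)
    (r : Fin n → ℕ) (hr : ∀ i, r i = (Finset.univ.filter fun j => g j ≤ g i).card) :
    (∀ i, ∑ j, (if g j ≤ g i then (1 : ℝ) else 0) /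
        ((Finset.univ.filter fun k => g j ≤ g k).card : ℝ)
      = harmonicR n - harmonicR (n - r i))
    ∧ ∀ ℓ : Fin n → ℝ,
      (1 / n : ℝ) * ∑ j, ((1 / n : ℝ) * ∑ i, ℓ i * (if g j ≤ g i then (1 : ℝ) else 0)) /
          ((1 / n : ℝ) * ∑ k, (if g j ≤ g k then (1 : ℝ) else 0))
        = (1 / n : ℝ) * ∑ i, (harmonicR n - harmonicR (n - r i)) * ℓ i := by
  classical
  set R : Fin n → ℕ := fun i => (Finset.univ.filter fun j => g j ≤ g i).card with hRdef
  have hmem : ∀ i : Fin n, i ∈ Finset.univ.filter fun j => g j ≤ g i := by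
    intro i; simp
  have hR1 : ∀ i, 1 ≤ R i := fun i => Finset.card_pos.mpr ⟨i, hmem i⟩
  have hRn : ∀ i, R i ≤ n := fun i => by
    simpa using (Finset.card_filter_le Finset.univ (fun j => g j ≤ g i))
  have hmono : ∀ i j, g j ≤ g i → R j ≤ R i := by
    intro i j h
    apply Finset.card_le_card
    intro k hk
    simp only [Finset.mem_filter, Finset.mem_univ, true_and] at hk ⊢
    exact hk.trans h
  have hmono' : ∀ i j, R j ≤ R i → g j ≤ g i := by
    intro i j h
    by_contra hc
    push_neg at hc
    have hsub : (Finset.univ.filter fun k => g k ≤ g i) ⊂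
        Finset.univ.filter fun k => g k ≤ g j := by
      constructor
      · intro k hk
        simp only [Finset.mem_filter, Finset.mem_univ, true_and] at hk ⊢
        exact hk.trans hc.le
      · intro hs
        have := hs (hmem j)
        simp only [Finset.mem_filter, Finset.mem_univ, true_and] at this
        exact absurd this (not_le.mpr hc)
    have hlt : R i < R j := Finset.card_lt_card hsub
    omega
  have hinj : Function.Injective R := by
    intro i j h
    exact hg (le_antisymm (hmono' j i h.le) (hmono' i j h.ge))
  have himage : Finset.image R Finset.univ = Finset.Icc 1 n := by
    apply Finset.eq_of_subset_of_card_le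
    · intro m hm
      simp only [Finset.mem_image, Finset.mem_univ, true_and] at hm
      obtain ⟨j, hj⟩ := hm
      subst hj
      exact Finset.mem_Icc.mpr ⟨hR1 j, hRn j⟩
    · rw [Finset.card_image_of_injective _ hinj]
      simp [Nat.card_Icc]
  have hsurj : ∀ m, 1 ≤ m → m ≤ n → ∃ j, R j = m := by
    intro m h1 h2
    have : m ∈ Finset.image R Finset.univ := himage ▸ Finset.mem_Icc.mpr ⟨h1, h2⟩
    obtain ⟨j, _, hj⟩ := Finset.mem_image.mp this
    exact ⟨j, hj⟩
  have hcardge : ∀ j, (Finset.univ.filter fun k => g j ≤ g k).card = n + 1 - R j := by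
    intro j
    have h1 : (Finset.univ.filter fun k => g j ≤ g k)
        = (Finset.univ.filter fun k => g k < g j)ᶜ := by
      ext k
      simp [not_lt]
    have h2 : (Finset.univ.filter fun k => g k ≤ g j)
        = insert j (Finset.univ.filter fun k => g k < g j) := by
      ext k
      simp only [Finset.mem_filter, Finset.mem_univ, true_and, Finset.mem_insert]
      constructor
      · intro h
        rcases lt_or_eq_of_le h with h | h
        · exact Or.inr h
        · exact Or.inl (hg h)
      · rintro (rfl | h)
        · exact le_rfl
        · exact h.le
    have hnotmem : j ∉ Finset.univ.filter fun k => g k < g j := by simp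
    have hRj : R j = (Finset.univ.filter fun k => g k < g j).card + 1 := by
      rw [hRdef]
      simp only
      rw [h2, Finset.card_insert_of_notMem hnotmem]
    have hcompl : ((Finset.univ.filter fun k => g k < g j)ᶜ).card
        = n - (Finset.univ.filter fun k => g k < g j).card := by
      rw [Finset.card_compl]
      simp
    have hle : (Finset.univ.filter fun k => g k < g j).card ≤ n := by
      simpa using Finset.card_filter_le Finset.univ (fun k => g k < g j)
    rw [h1, hcompl]
    omega
  -- Part 1
  have key : ∀ i, (∑ j, (if g j ≤ g i then (1 : ℝ) else 0) /
      ((Finset.univ.filter fun k => g j ≤ g k).card : ℝ))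
      = harmonicR n - harmonicR (n - R i) := by
    intro i
    have step1 : (∑ j, (if g j ≤ g i then (1 : ℝ) else 0) /
        ((Finset.univ.filter fun k => g j ≤ g k).card : ℝ))
        = ∑ j ∈ Finset.univ.filter (fun j => g j ≤ g i),
            (1 : ℝ) / ((n + 1 - R j : ℕ) : ℝ) := by
      rw [Finset.sum_filter]
      apply Finset.sum_congr rfl
      intro j _
      rw [hcardge j]
      split <;> simp
    have step2 : (∑ j ∈ Finset.univ.filter (fun j => g j ≤ g i),
          (1 : ℝ) / ((n + 1 - R j : ℕ) : ℝ))
        = ∑ m ∈ Finset.Icc 1 (R i), (1 : ℝ) / ((n + 1 - m : ℕ) : ℝ) := by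
      apply Finset.sum_bij (fun j _ => R j)
      · intro j hj
        simp only [Finset.mem_filter, Finset.mem_univ, true_and] at hj
        exact Finset.mem_Icc.mpr ⟨hR1 j, hmono i j hj⟩
      · intro a _ b _ h
        exact hinj h
      · intro m hm
        rw [Finset.mem_Icc] at hm
        obtain ⟨j, hj⟩ := hsurj m hm.1 (hm.2.trans (hRn i))
        refine ⟨j, ?_, hj⟩
        simp only [Finset.mem_filter, Finset.mem_univ, true_and]
        exact hmono' i j (by rw [hj]; exact hm.2)
      · intro j _
        rfl
    have step3 : (∑ m ∈ Finset.Icc 1 (R i), (1 : ℝ) / ((n + 1 - m : ℕ) : ℝ))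
        = ∑ k ∈ Finset.Ico (n - R i) n, (1 : ℝ) / (k + 1) := by
      apply Finset.sum_nbij' (fun m => n - m) (fun k => n - k)
      · intro m hm
        rw [Finset.mem_Icc] at hm
        have := hRn i
        rw [Finset.mem_Ico]
        omega
      · intro k hk
        rw [Finset.mem_Ico] at hk
        have := hRn i
        rw [Finset.mem_Icc]
        omega
      · intro m hm
        rw [Finset.mem_Icc] at hm
        have := hRn i
        omega
      · intro k hk
        rw [Finset.mem_Ico] at hk
        omega
      · intro m hm
        rw [Finset.mem_Icc] at hm
        have := hRn i
        have hcast : ((n + 1 - m : ℕ) : ℝ) = ((n - m : ℕ) : ℝ) + 1 := by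
          have : n + 1 - m = (n - m) + 1 := by omega
          rw [this]
          push_cast
          ring
        rw [hcast]
    rw [step1, step2, step3, harmonic_diff n (R i) (hRn i)]
  -- Part 2
  have hn0 : (1 / n : ℝ) ≠ 0 := by
    have : (0 : ℝ) < n := by exact_mod_cast hn
    positivity
  have hsumind : ∀ j, (∑ k, (if g j ≤ g k then (1 : ℝ) else 0))
      = ((Finset.univ.filter fun k => g j ≤ g k).card : ℝ) := by
    intro j
    simp [Finset.sum_boole]
  constructor
  · intro i
    rw [hr i]
    exact key i
  · intro ℓ
    congr 1
    calc (∑ j, ((1 / n : ℝ) * ∑ i, ℓ i * (if g j ≤ g i then (1 : ℝ) else 0)) /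
          ((1 / n : ℝ) * ∑ k, (if g j ≤ g k then (1 : ℝ) else 0)))
        = ∑ j, (∑ i, ℓ i * (if g j ≤ g i then (1 : ℝ) else 0)) /
            ((Finset.univ.filter fun k => g j ≤ g k).card : ℝ) := by
          apply Finset.sum_congr rfl
          intro j _
          rw [hsumind j, mul_div_mul_left _ _ hn0]
      _ = ∑ j, ∑ i, ℓ i * (if g j ≤ g i then (1 : ℝ) else 0) /
            ((Finset.univ.filter fun k => g j ≤ g k).card : ℝ) := by
          apply Finset.sum_congr rfl
          intro j _
          rw [Finset.sum_div]
      _ = ∑ i, ∑ j, ℓ i * (if g j ≤ g i then (1 : ℝ) else 0) /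
            ((Finset.univ.filter fun k => g j ≤ g k).card : ℝ) := Finset.sum_comm
      _ = ∑ i, ℓ i * ∑ j, (if g j ≤ g i then (1 : ℝ) else 0) /
            ((Finset.univ.filter fun k => g j ≤ g k).card : ℝ) := by
          apply Finset.sum_congr rfl
          intro i _
          rw [Finset.mul_sum]
          refine Finset.sum_congr rfl fun j _ => ?_
          ring
      _ = ∑ i, (harmonicR n - harmonicR (n - r i)) * ℓ i := by
          apply Finset.sum_congr rfl
          intro i _
          rw [key i, hr i]
          ring
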